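/- Every analytic subset of the Cantor space Σ^ω over a finite alphabet Σ (with at least two letters) is either Π⁰₂-hard or a Σ⁰₂ set. -/

import Mathlib

open Set Topology

namespace Pi02Aux

/-- cylinder given by first `n` values of `x` -/
def cyl {β : Type} (x : ℕ → β) (n : ℕ) : Set (ℕ → β) := {y | ∀ i < n, y i = x i}

/-- cylinder of a finite word -/
def cylW {β : Type} (w : List β) : Set (ℕ → β) :=
  {y | ∀ (i : ℕ) (h : i < w.length), y i = w.get ⟨i, h⟩}

variable {β : Type}

lemma mem_cyl_self (x : ℕ → β) (n : ℕ) : x ∈ cyl x n := fun _ _ => rfl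

lemma cyl_mono (x : ℕ → β) {m n : ℕ} (h : m ≤ n) : cyl x n ⊆ cyl x m :=
  fun _ hy i hi => hy i (lt_of_lt_of_le hi h)

lemma cyl_congr {x x' : ℕ → β} {n : ℕ} (h : ∀ i < n, x' i = x i) : cyl x' n = cyl x n := by
  ext y; exact ⟨fun hy i hi => (hy i hi).trans (h i hi), fun hy i hi => (hy i hi).trans (h i hi).symm⟩

lemma cylW_ofFn (x : ℕ → β) (n : ℕ) : cylW (List.ofFn fun i : Fin n => x i) = cyl x n := by
  ext y
  simp only [cylW, cyl, mem_setOf_eq, List.length_ofFn, List.get_ofFn]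
  constructor
  · intro hy i hi; simpa using hy i hi
  · intro hy i hi; simpa using hy i hi

lemma mem_cylW_pfx (x : ℕ → β) (n : ℕ) : x ∈ cylW (List.ofFn fun i : Fin n => x i) := by
  rw [cylW_ofFn]; exact mem_cyl_self x n

lemma cylW_nil : cylW ([] : List β) = univ := by
  ext y; simp [cylW]

lemma get_append_aux {l₁ l₂ : List β} (n : ℕ) (h : n < l₁.length) :
    (l₁ ++ l₂).get ⟨n, by simp; omega⟩ = l₁.get ⟨n, h⟩ := by
  simp [List.getElem_append_left h]

lemma cylW_prefix_subset {w1 w2 : List β} (h : w1 <+: w2) : cylW w2 ⊆ cylW w1 := by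
  obtain ⟨t, rfl⟩ := h
  intro y hy i hi
  have hi2 : i < (w1 ++ t).length := by simp; omega
  have := hy i hi2
  rwa [get_append_aux i hi] at this

lemma mem_cylW_append_singleton {w : List β} {k : β} {y : ℕ → β} :
    y ∈ cylW (w ++ [k]) ↔ y ∈ cylW w ∧ y w.length = k := by
  constructor
  · intro hy
    refine ⟨cylW_prefix_subset ⟨[k], rfl⟩ hy, ?_⟩
    have hl : w.length < (w ++ [k]).length := by simp
    have := hy w.length hl
    simpa using this
  · intro ⟨h1, h2⟩ i hi
    rcases Nat.lt_or_ge i w.length with hlt | hge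
    · rw [get_append_aux i hlt]; exact h1 i hlt
    · have : i = w.length := by simp at hi; omega
      subst this
      simpa using h2

lemma cylW_eq_iUnion (w : List β) : cylW w = ⋃ k : β, cylW (w ++ [k]) := by
  ext y
  simp only [mem_iUnion, mem_cylW_append_singleton]
  exact ⟨fun hy => ⟨y w.length, hy, rfl⟩, fun ⟨k, hk, _⟩ => hk⟩

lemma list_get_of_prefix {w1 w2 : List β} (h : w1 <+: w2) (i : ℕ) (h1 : i < w1.length)
    (h2 : i < w2.length) : w1.get ⟨i, h1⟩ = w2.get ⟨i, h2⟩ := by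
  obtain ⟨t, rfl⟩ := h
  exact (get_append_aux i h1).symm

section Topo
variable [TopologicalSpace β] [DiscreteTopology β]

lemma isOpen_cylW (w : List β) : IsOpen (cylW w) := by
  have : cylW w = ⋂ i : Fin w.length, (fun y : ℕ → β => y i) ⁻¹' {w.get i} := by
    ext y
    simp only [cylW, mem_setOf_eq, mem_iInter, mem_preimage, mem_singleton_iff]
    exact ⟨fun hy i => hy i i.2, fun hy i hi => hy ⟨i, hi⟩⟩
  rw [this]
  exact isOpen_iInter_of_finite fun i => (isOpen_discrete _).preimage (continuous_apply _)

lemma isClosed_cylW (w : List β) : IsClosed (cylW w) := by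
  have : cylW w = ⋂ i : Fin w.length, (fun y : ℕ → β => y i) ⁻¹' {w.get i} := by
    ext y
    simp only [cylW, mem_setOf_eq, mem_iInter, mem_preimage, mem_singleton_iff]
    exact ⟨fun hy i => hy i i.2, fun hy i hi => hy ⟨i, hi⟩⟩
  rw [this]
  exact isClosed_iInter fun i => (isClosed_discrete _).preimage (continuous_apply _)

lemma isOpen_cyl (x : ℕ → β) (n : ℕ) : IsOpen (cyl x n) := by
  rw [← cylW_ofFn]; exact isOpen_cylW _

lemma exists_cyl_subset {U : Set (ℕ → β)} (hU : IsOpen U) {x : ℕ → β} (hx : x ∈ U) :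
    ∃ n : ℕ, cyl x n ⊆ U := by
  rcases (isOpen_pi_iff.mp hU) x hx with ⟨I, u, h1, h2⟩
  rcases I.bddAbove with ⟨n, hn⟩
  refine ⟨n + 1, fun y hy => h2 ?_⟩
  intro i hi
  rw [hy i (Nat.lt_succ_of_le (hn hi))]
  exact (h1 i hi).2

/-- continuity of coordinatewise locally determined maps into discrete spaces -/
lemma continuous_of_local {γ : Type} [TopologicalSpace γ] [DiscreteTopology γ]
    (f : (ℕ → β) → ℕ → γ)
    (hf : ∀ x n, ∀ y ∈ cyl x (n + 1), f y n = f x n) : Continuous f := by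
  apply continuous_pi
  intro n
  have : IsLocallyConstant fun x => f x n := by
    intro s
    rw [isOpen_iff_mem_nhds]
    intro x hx
    refine Filter.mem_of_superset ((isOpen_cyl x (n+1)).mem_nhds (mem_cyl_self x (n+1))) ?_
    intro y hy
    simpa only [mem_preimage, hf x n y hy] using hx
  exact this.continuous

end Topo

/-- Σ⁰₂ : countable unions of closed sets -/
def Sigma02 {Z : Type} [TopologicalSpace Z] (S : Set Z) : Prop :=
  ∃ C : ℕ → Set Z, (∀ n, IsClosed (C n)) ∧ S = ⋃ n, C n

section SigmaLemmas
variable {Z : Type} [TopologicalSpace Z]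

lemma sigma02_empty : Sigma02 (∅ : Set Z) :=
  ⟨fun _ => ∅, fun _ => isClosed_empty, by simp⟩

lemma Sigma02.of_isClosed {S : Set Z} (h : IsClosed S) : Sigma02 S :=
  ⟨fun _ => S, fun _ => h, (iUnion_const S).symm⟩

lemma sigma02_iUnion {ι : Type} [Countable ι] {S : ι → Set Z} (h : ∀ i, Sigma02 (S i)) :
    Sigma02 (⋃ i, S i) := by
  cases isEmpty_or_nonempty ι
  · simp only [iUnion_of_empty]; exact sigma02_empty
  · obtain ⟨f, hf⟩ := exists_surjective_nat ι
    choose C hC hEq using h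
    refine ⟨fun n => C (f n.unpair.1) n.unpair.2, fun n => hC _ _, ?_⟩
    ext x
    simp only [mem_iUnion]
    constructor
    · rintro ⟨i, hi⟩
      obtain ⟨a, rfl⟩ := hf i
      rw [hEq] at hi
      obtain ⟨m, hm⟩ := mem_iUnion.mp hi
      exact ⟨Nat.pair a m, by rwa [Nat.unpair_pair]⟩
    · rintro ⟨n, hn⟩
      exact ⟨f n.unpair.1, (hEq _) ▸ mem_iUnion.mpr ⟨n.unpair.2, hn⟩⟩

lemma Sigma02.union {S T : Set Z} (hS : Sigma02 S) (hT : Sigma02 T) : Sigma02 (S ∪ T) := by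
  have : S ∪ T = ⋃ b : Bool, (if b then S else T) := by
    ext x
    simp only [mem_union, mem_iUnion, Bool.exists_bool, if_true, if_false]
    tauto
  rw [this]
  exact sigma02_iUnion fun b => by cases b <;> simpa

end SigmaLemmas


noncomputable section Main

variable {α : Type} [Countable α] [TopologicalSpace α] [DiscreteTopology α]
variable (h : (ℕ → ℕ) → ℕ → α) (A : Set (ℕ → α))

/-- `N ∩ h''[s]` can be separated from the complement of `A` by a Σ⁰₂ set -/
def Sep (N : Set (ℕ → α)) (s : List ℕ) : Prop :=
  ∃ S : Set (ℕ → α), Sigma02 S ∧ N ∩ (h '' cylW s) ⊆ S ∧ S ⊆ A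

lemma sep_of_empty {N : Set (ℕ → α)} {s : List ℕ} (hN : N ∩ (h '' cylW s) = ∅) : Sep h A N s :=
  ⟨∅, sigma02_empty, by rw [hN], empty_subset A⟩

lemma nonempty_of_nsep {N : Set (ℕ → α)} {s : List ℕ} (hN : ¬ Sep h A N s) :
    (N ∩ (h '' cylW s)).Nonempty := by
  by_contra hc
  exact hN (sep_of_empty h A (not_nonempty_iff_eq_empty.mp hc))

lemma nsep_base (hr : range h = A) (hNA : ¬ Sigma02 A) : ¬ Sep h A univ [] := by
  rintro ⟨S, hS, h1, h2⟩
  rw [cylW_nil, image_univ, hr, univ_inter] at h1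
  have : S = A := subset_antisymm h2 h1
  exact hNA (this ▸ hS)

lemma nsep_succ {N : Set (ℕ → α)} {s : List ℕ} (hN : ¬ Sep h A N s) :
    ∃ k : ℕ, ¬ Sep h A N (s ++ [k]) := by
  by_contra hc
  push_neg at hc
  choose S hS1 hS2 hS3 using hc
  refine hN ⟨⋃ k, S k, sigma02_iUnion hS1, ?_, iUnion_subset hS3⟩
  rintro x ⟨hxN, q, hq, rfl⟩
  have : q ∈ cylW (s ++ [q s.length]) :=
    mem_cylW_append_singleton.mpr ⟨hq, rfl⟩
  exact mem_iUnion.mpr ⟨q s.length, hS2 _ ⟨hxN, q, this, rfl⟩⟩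

lemma nsep_localize {N : Set (ℕ → α)} {s : List ℕ} (hN : ¬ Sep h A N s) :
    ∃ x : ℕ → α, x ∉ A ∧ ∀ w : List α, x ∈ cylW w → ¬ Sep h A (cylW w ∩ N) s := by
  by_contra hcon
  push_neg at hcon
  -- hcon : ∀ x, x ∉ A → ∃ w, x ∈ cylW w ∧ Sep h A (cylW w ∩ N) s
  classical
  set H : Set (ℕ → α) := {x | ∀ w : List α, x ∈ cylW w → ¬ Sep h A (cylW w ∩ N) s} with hHdef
  have hHA : H ⊆ A := by
    intro x hx
    by_contra hxA
    obtain ⟨w, hw1, hw2⟩ := hcon x hxA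
    exact hx w hw1 hw2
  have hHclosed : IsClosed H := by
    have : H = ⋂ w : List α, {x : ℕ → α | x ∈ cylW w → ¬ Sep h A (cylW w ∩ N) s} := by
      ext x; simp only [hHdef, mem_setOf_eq, mem_iInter]
    rw [this]
    refine isClosed_iInter fun w => ?_
    by_cases hw : Sep h A (cylW w ∩ N) s
    · have : {x : ℕ → α | x ∈ cylW w → ¬ Sep h A (cylW w ∩ N) s} = (cylW w)ᶜ := by
        ext x; simp [hw]
      rw [this]
      exact (isOpen_cylW w).isClosed_compl
    · have : {x : ℕ → α | x ∈ cylW w → ¬ Sep h A (cylW w ∩ N) s} = univ := by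
        ext x; simp [hw]
      rw [this]; exact isClosed_univ
  set T : List α → Set (ℕ → α) := fun w =>
    if c : Sep h A (cylW w ∩ N) s then c.choose else ∅ with hTdef
  have hTsig : ∀ w, Sigma02 (T w) := by
    intro w
    rw [hTdef]
    by_cases c : Sep h A (cylW w ∩ N) s
    · simp only [dif_pos c]; exact c.choose_spec.1
    · simp only [dif_neg c]; exact sigma02_empty
  have hTA : ∀ w, T w ⊆ A := by
    intro w
    rw [hTdef]
    by_cases c : Sep h A (cylW w ∩ N) s
    · simp only [dif_pos c]; exact c.choose_spec.2.2
    · simp only [dif_neg c]; exact empty_subset A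
  refine hN ⟨H ∪ ⋃ w : List α, T w, (Sigma02.of_isClosed hHclosed).union
    (sigma02_iUnion hTsig), ?_, union_subset hHA (iUnion_subset hTA)⟩
  intro x hx
  by_cases hxH : x ∈ H
  · exact Or.inl hxH
  · simp only [hHdef, mem_setOf_eq, not_forall] at hxH
    obtain ⟨w, hw1, hw2⟩ := hxH
    rw [not_not] at hw2
    refine Or.inr (mem_iUnion.mpr ⟨w, ?_⟩)
    have : x ∈ T w := by
      rw [hTdef]
      simp only [dif_pos hw2]
      exact hw2.choose_spec.2.1 ⟨⟨hw1, hx.1⟩, hx.2⟩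
    exact this


/-- nodes of the Cantor scheme -/
structure Nd (α : Type) where
  ell : ℕ
  str : List ℕ
  pt : ℕ → α

variable {α : Type} [Countable α] [TopologicalSpace α] [DiscreteTopology α]
variable (h : (ℕ → ℕ) → ℕ → α) (A : Set (ℕ → α))

/-- the invariant of the construction -/
def Inv (v : Nd α) : Prop :=
  v.pt ∉ A ∧ ∀ n, v.ell ≤ n → ¬ Sep h A (cyl v.pt n) v.str

lemma inv_base (hr : range h = A) (hNA : ¬ Sigma02 A) :
    ∃ v : Nd α, Inv h A v ∧ v.ell = 0 ∧ v.str = [] := by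
  obtain ⟨x, hxA, hx⟩ := nsep_localize h A (nsep_base h A hr hNA)
  refine ⟨⟨0, [], x⟩, ⟨hxA, ?_⟩, rfl, rfl⟩
  intro n _
  have := hx (List.ofFn fun i : Fin n => x i) (mem_cylW_pfx x n)
  rwa [cylW_ofFn, inter_univ] at this

lemma step_false (v : Nd α) (hv : Inv h A v) : Inv h A ⟨v.ell + 1, v.str, v.pt⟩ :=
  ⟨hv.1, fun n hn => hv.2 n (le_trans (Nat.le_succ _) hn)⟩

lemma step_true (v : Nd α) (hv : Inv h A v) :
    ∃ v' : Nd α, Inv h A v' ∧ v'.ell = v.ell + 1 ∧ v'.str.length = v.str.length + 1 ∧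
      v.str <+: v'.str ∧ ∀ j < v.ell + 1, v'.pt j = v.pt j := by
  have h1 : ¬ Sep h A (cyl v.pt (v.ell + 1)) v.str := hv.2 _ (Nat.le_succ _)
  obtain ⟨k, h2⟩ := nsep_succ h A h1
  obtain ⟨x', hx'A, hx'⟩ := nsep_localize h A h2
  have hNE0 := nonempty_of_nsep h A (hx' _ (mem_cylW_pfx x' (v.ell + 1)))
  rw [cylW_ofFn] at hNE0
  obtain ⟨z, ⟨hz1, hz2⟩, -⟩ := hNE0
  have hagree : ∀ j < v.ell + 1, x' j = v.pt j := fun j hj => (hz1 j hj).symm.trans (hz2 j hj)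
  refine ⟨⟨v.ell + 1, v.str ++ [k], x'⟩, ⟨hx'A, ?_⟩, rfl, by simp, ⟨[k], rfl⟩, hagree⟩
  intro n hn
  have h3 := hx' (List.ofFn fun i : Fin n => x' i) (mem_cylW_pfx x' n)
  rw [cylW_ofFn] at h3
  have hsub : cyl x' n ⊆ cyl v.pt (v.ell + 1) := by
    rw [← cyl_congr hagree]
    exact cyl_mono x' hn
  rwa [inter_eq_self_of_subset_left hsub] at h3

lemma exists_g (hcont : Continuous h) (hr : range h = A) (hNA : ¬ Sigma02 A) :
    ∃ g : (ℕ → Bool) → ℕ → α, Continuous g ∧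
      ∀ b : ℕ → Bool, (g b ∈ A ↔ ∀ n, ∃ m, n ≤ m ∧ b m = true) := by
  obtain ⟨v0, hv0, hl0, hs0⟩ := inv_base h A hr hNA
  have stepEx : ∀ (p : {v : Nd α // Inv h A v}) (i : Bool), ∃ q : {v : Nd α // Inv h A v},
      q.1.ell = p.1.ell + 1 ∧ p.1.str <+: q.1.str ∧ (∀ j < p.1.ell, q.1.pt j = p.1.pt j) ∧
      (i = true → q.1.str.length = p.1.str.length + 1) ∧
      (i = false → q.1.pt = p.1.pt ∧ q.1.str = p.1.str) := by
    rintro ⟨v, hv⟩ i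
    cases i
    · exact ⟨⟨⟨v.ell + 1, v.str, v.pt⟩, step_false h A v hv⟩, rfl, List.prefix_refl _,
        fun j _ => rfl, by simp, fun _ => ⟨rfl, rfl⟩⟩
    · obtain ⟨v', hv', he, hlen, hpre, hag⟩ := step_true h A v hv
      exact ⟨⟨v', hv'⟩, he, hpre, fun j hj => hag j (Nat.lt_succ_of_lt hj), fun _ => hlen,
        by simp⟩
  choose st hst1 hst2 hst3 hst4 hst5 using stepEx
  set ch : (ℕ → Bool) → ℕ → {v : Nd α // Inv h A v} :=
    fun b n => Nat.rec ⟨v0, hv0⟩ (fun m ih => st ih (b m)) n with hch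
  have chS : ∀ b n, ch b (n + 1) = st (ch b n) (b n) := fun _ _ => rfl
  have chL : ∀ b n, (ch b n).1.ell = n := by
    intro b n; induction n with
    | zero => exact hl0
    | succ n ih => rw [chS, hst1, ih]
  have chCongr : ∀ b b' n, (∀ j < n, b j = b' j) → ch b n = ch b' n := by
    intro b b' n; induction n with
    | zero => intro _; rfl
    | succ n ih =>
      intro hj
      rw [chS, chS, ih (fun j hjn => hj j (Nat.lt_succ_of_lt hjn)), hj n (Nat.lt_succ_self n)]
  have chAg : ∀ b n n', n ≤ n' → ∀ j < n, (ch b n').1.pt j = (ch b n).1.pt j := by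
    intro b n n' hnn'
    induction n' with
    | zero =>
      intro j hj
      have : n = 0 := Nat.eq_zero_of_le_zero hnn'
      omega
    | succ n' ih =>
      rcases Nat.lt_or_ge n (n' + 1) with hlt | hge
      · intro j hj
        have hj' : j < (ch b n').1.ell := by rw [chL]; omega
        rw [chS, hst3 (ch b n') (b n') j hj']
        exact ih (by omega) j hj
      · have hEq : n = n' + 1 := le_antisymm hnn' hge
        subst hEq
        intro j hj; rfl
  have chPre : ∀ b n n', n ≤ n' → (ch b n).1.str <+: (ch b n').1.str := by
    intro b n n' hnn'; induction n' with
    | zero =>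
      have : n = 0 := Nat.eq_zero_of_le_zero hnn'
      subst this; exact List.prefix_refl _
    | succ n' ih =>
      rcases Nat.lt_or_ge n (n' + 1) with hlt | hge
      · refine (ih (by omega)).trans ?_
        rw [chS]; exact hst2 (ch b n') (b n')
      · have hEq : n = n' + 1 := le_antisymm hnn' hge
        subst hEq; exact List.prefix_refl _
  set g : (ℕ → Bool) → ℕ → α := fun b i => (ch b (i + 1)).1.pt i with hg
  have hgmem : ∀ b n, ∀ j < n, g b j = (ch b n).1.pt j := by
    intro b n j hj
    exact (chAg b (j + 1) n (by omega) j (Nat.lt_succ_self j)).symm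
  refine ⟨g, ?_, ?_⟩
  · apply continuous_of_local
    intro x n y hy
    show (ch y (n + 1)).1.pt n = (ch x (n + 1)).1.pt n
    rw [chCongr y x (n + 1) (fun j hj => hy j hj)]
  · intro b
    constructor
    · intro hgA
      by_contra hfin
      push_neg at hfin
      obtain ⟨n0, hn0⟩ := hfin
      have hstab : ∀ m, n0 ≤ m → (ch b m).1.pt = (ch b n0).1.pt := by
        intro m hm; induction m with
        | zero =>
          have : n0 = 0 := Nat.eq_zero_of_le_zero hm
          rw [this]
        | succ m ih =>
          rcases Nat.lt_or_ge n0 (m + 1) with hlt | hge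
          · have hbm : b m = false := by
              have := hn0 m (by omega)
              simpa using this
            rw [chS, (hst5 (ch b m) (b m) hbm).1, ih (by omega)]
          · have : n0 = m + 1 := le_antisymm hm hge
            rw [this]
      have hgb : g b = (ch b n0).1.pt := by
        funext i
        rcases Nat.lt_or_ge i n0 with hlt | hge
        · exact hgmem b n0 i hlt
        · show (ch b (i + 1)).1.pt i = _
          rw [hstab (i + 1) (by omega)]
      rw [hgb] at hgA
      exact (ch b n0).2.1 hgA
    · intro hinf
      have hlenmono : ∀ n n', n ≤ n' → (ch b n).1.str.length ≤ (ch b n').1.str.length :=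
        fun n n' hnn' => (chPre b n n' hnn').length_le
      have hunb : ∀ j, ∃ n, j < (ch b n).1.str.length := by
        intro j; induction j with
        | zero =>
          obtain ⟨m, -, hm2⟩ := hinf 0
          refine ⟨m + 1, ?_⟩
          rw [chS, hst4 (ch b m) (b m) hm2]
          omega
        | succ j ih =>
          obtain ⟨n, hn⟩ := ih
          obtain ⟨m, hm1, hm2⟩ := hinf n
          refine ⟨m + 1, ?_⟩
          have hL : (ch b (m + 1)).1.str.length = (ch b m).1.str.length + 1 := by
            rw [chS, hst4 (ch b m) (b m) hm2]
          have h2 : (ch b n).1.str.length ≤ (ch b m).1.str.length := hlenmono n m hm1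
          omega
      choose nf hnf using hunb
      set y : ℕ → ℕ := fun j => (ch b (nf j)).1.str.get ⟨j, hnf j⟩ with hy
      have hykey : ∀ n (j : ℕ) (hj : j < (ch b n).1.str.length),
          y j = (ch b n).1.str.get ⟨j, hj⟩ := by
        intro n j hj
        rcases le_total n (nf j) with hc | hc
        · exact (list_get_of_prefix (chPre b n (nf j) hc) j hj (hnf j)).symm
        · exact list_get_of_prefix (chPre b (nf j) n hc) j (hnf j) hj
      suffices hgy : g b = h y by rw [hgy, ← hr]; exact mem_range_self y
      funext j
      have hUopen : IsOpen (h ⁻¹' cyl (h y) (j + 1)) := (isOpen_cyl (h y) (j + 1)).preimage hcont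
      have hymem : y ∈ h ⁻¹' cyl (h y) (j + 1) := mem_cyl_self (h y) (j + 1)
      obtain ⟨jj, hjj⟩ := exists_cyl_subset hUopen hymem
      obtain ⟨n1, hn1⟩ : ∃ n, jj < (ch b n).1.str.length := ⟨nf jj, hnf jj⟩
      set n := max n1 (j + 1) with hn
      have hlen1 : jj ≤ (ch b n).1.str.length :=
        le_trans (le_of_lt hn1) (hlenmono n1 n (le_max_left _ _))
      have hinv : ¬ Sep h A (cyl (ch b n).1.pt n) (ch b n).1.str :=
        (ch b n).2.2 n (le_of_eq (chL b n))
      obtain ⟨p, hp1, q, hq, hpq⟩ := nonempty_of_nsep h A hinv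
      have hq2 : q ∈ cyl y jj := by
        intro i hi
        have hi2 : i < (ch b n).1.str.length := lt_of_lt_of_le hi hlen1
        rw [hq i hi2]
        exact (hykey n i hi2).symm
      have hp2 : h q ∈ cyl (h y) (j + 1) := hjj hq2
      have hjlt : j < n := lt_of_lt_of_le (Nat.lt_succ_self j) (le_max_right n1 (j + 1))
      calc g b j = (ch b n).1.pt j := hgmem b n j hjlt
        _ = h q j := by rw [← hpq] at hp1; exact (hp1 j hjlt).symm
        _ = h y j := hp2 j (Nat.lt_succ_self j)


lemma gdelta_reduction {Y : Type} [TopologicalSpace Y] [DiscreteTopology Y]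
    {E : Set (ℕ → Y)} (hE : IsGδ E) :
    ∃ r : (ℕ → Y) → ℕ → Bool, Continuous r ∧
      ∀ x, (x ∈ E ↔ ∀ n, ∃ m, n ≤ m ∧ r x m = true) := by
  classical
  obtain ⟨U, hUopen, hEeq⟩ := isGδ_iff_eq_iInter_nat.mp hE
  set V : ℕ → Set (ℕ → Y) := fun m => ⋂ k ∈ Finset.range m, U k with hV
  have hVopen : ∀ m, IsOpen (V m) := fun m => isOpen_biInter_finset fun k _ => hUopen k
  have hVmem : ∀ x m, x ∈ V m ↔ ∀ k, k < m → x ∈ U k := by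
    intro x m; simp [hV, Finset.mem_range]
  have hVanti : ∀ {m m'}, m ≤ m' → V m' ⊆ V m := by
    intro m m' hmm' x hx
    rw [hVmem] at hx ⊢; exact fun k hk => hx k (by omega)
  set D : (ℕ → Y) → ℕ → ℕ := fun x n => Nat.findGreatest (fun m => cyl x n ⊆ V m) n with hD
  have hduse : ∀ x n, cyl x n ⊆ V (D x n) := by
    intro x n
    have h0 : (fun m => cyl x n ⊆ V m) 0 := by
      intro y _
      rw [hVmem]
      intro k hk
      exact absurd hk (Nat.not_lt_zero k)
    have hsp := Nat.findGreatest_spec (P := fun m => cyl x n ⊆ V m) (Nat.zero_le n) h0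
    simpa [hD] using hsp
  have hDmono : ∀ x n n', n ≤ n' → D x n ≤ D x n' := by
    intro x n n' hnn'
    induction n' with
    | zero => have hn : n = 0 := by omega
              subst hn; exact le_refl _
    | succ n' ih =>
      rcases Nat.lt_or_ge n (n' + 1) with hlt | hge
      · refine le_trans (ih (by omega)) ?_
        have hDn' : D x n' ≤ n' + 1 := le_trans (Nat.findGreatest_le n') (by omega)
        have hple : (fun m => cyl x (n' + 1) ⊆ V m) (D x n') :=
          subset_trans (cyl_mono x (by omega)) (hduse x n')
        have := Nat.le_findGreatest (P := fun m => cyl x (n' + 1) ⊆ V m) hDn' hple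
        simpa [hD] using this
      · have hn : n = n' + 1 := by omega
        subst hn; exact le_refl _
  have hkey : ∀ x, x ∈ E ↔ ∀ m, ∃ n, m ≤ D x n := by
    intro x; rw [hEeq]; constructor
    · intro hx m
      have hxV : x ∈ V m := by rw [hVmem]; intro k _; exact mem_iInter.mp hx k
      obtain ⟨n0, hn0⟩ := exists_cyl_subset (hVopen m) hxV
      refine ⟨max n0 m, ?_⟩
      have hple : (fun k => cyl x (max n0 m) ⊆ V k) m :=
        subset_trans (cyl_mono x (le_max_left n0 m)) hn0
      have := Nat.le_findGreatest (P := fun k => cyl x (max n0 m) ⊆ V k)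
        (le_max_right n0 m) hple
      simpa [hD] using this
    · intro hx
      rw [mem_iInter]; intro k
      obtain ⟨n, hn⟩ := hx (k + 1)
      have h1 : x ∈ V (D x n) := hduse x n (mem_cyl_self x n)
      have h2 : x ∈ V (k + 1) := hVanti hn h1
      rw [hVmem] at h2; exact h2 k (by omega)
  set r : (ℕ → Y) → ℕ → Bool := fun x n => decide (D x n < D x (n + 1)) with hrd
  have hDloc : ∀ x y n, y ∈ cyl x n → D y n = D x n := by
    intro x y n hy
    have hcc : cyl y n = cyl x n := cyl_congr (fun i hi => hy i hi)
    simp only [hD, hcc]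
  refine ⟨r, continuous_of_local r ?_, ?_⟩
  · intro x n y hy
    have h1 : D y n = D x n := hDloc x y n (cyl_mono x (Nat.le_succ n) hy)
    have h2 : D y (n + 1) = D x (n + 1) := hDloc x y (n + 1) hy
    simp only [hrd, h1, h2]
  · intro x
    rw [hkey]
    constructor
    · intro hx n
      by_contra hc
      push_neg at hc
      have hbd : ∀ m, n ≤ m → D x m ≤ D x n := by
        intro m hm; induction m with
        | zero => have hn : n = 0 := by omega
                  subst hn; exact le_refl _
        | succ m ih =>
          rcases Nat.lt_or_ge n (m + 1) with hlt | hge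
          · have hct := hc m (by omega)
            have hnd : ¬ (D x m < D x (m + 1)) := by simpa [hrd] using hct
            have := ih (by omega)
            omega
          · have hn : n = m + 1 := by omega
            subst hn; exact le_refl _
      obtain ⟨m0, hm0⟩ := hx (D x n + 1)
      rcases le_or_gt m0 n with hcase | hcase
      · have := hDmono x m0 n hcase; omega
      · have := hbd m0 (by omega); omega
    · intro hx m
      induction m with
      | zero => exact ⟨0, Nat.zero_le _⟩
      | succ m ih =>
        obtain ⟨n, hn⟩ := ih
        obtain ⟨m', hm'1, hm'2⟩ := hx n
        have hlt : D x m' < D x (m' + 1) := by simpa [hrd] using hm'2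
        have h3 : D x n ≤ D x m' := hDmono x n m' hm'1
        exact ⟨m' + 1, by omega⟩

end Main

end Pi02Aux

theorem analytic_pi02_hard_or_sigma02 {α : Type} [Fintype α]
    [TopologicalSpace α] [DiscreteTopology α] (hcard : 2 ≤ Fintype.card α)
    (A : Set (ℕ → α)) (hA : MeasureTheory.AnalyticSet A) :
    (∀ (Y : Type) [Fintype Y] [TopologicalSpace Y] [DiscreteTopology Y]
        (E : Set (ℕ → Y)), IsGδ E →
        ∃ f : (ℕ → Y) → (ℕ → α), Continuous f ∧ E = f ⁻¹' A) ∨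
      ∃ C : ℕ → Set (ℕ → α), (∀ n, IsClosed (C n)) ∧ A = ⋃ n, C n := by
  classical
  by_cases hS : ∃ C : ℕ → Set (ℕ → α), (∀ n, IsClosed (C n)) ∧ A = ⋃ n, C n
  · exact Or.inr hS
  · left
    have hNA : ¬ Pi02Aux.Sigma02 A := hS
    rw [MeasureTheory.AnalyticSet] at hA
    rcases hA with hA0 | ⟨h, hcont, hr⟩
    · exact absurd (by rw [hA0]; exact Pi02Aux.sigma02_empty) hNA
    · obtain ⟨g, hgcont, hgiff⟩ := Pi02Aux.exists_g h A hcont hr hNA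
      intro Y _ _ _ E hE
      obtain ⟨r, hrcont, hriff⟩ := Pi02Aux.gdelta_reduction hE
      refine ⟨g ∘ r, hgcont.comp hrcont, ?_⟩
      ext x
      simp only [Set.mem_preimage, Function.comp_apply]
      rw [hriff x, ← hgiff (r x)]
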